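/- arXiv:1011.3882 — 2 statements merged into one kernel-verified Lean document; each statement's English description precedes it below -/
import Mathlib

section
/- Let T be a tree with a edges and let G be a connected graph with at least a+1 vertices that contains a clique of order a. Then T can be embedded in G. -/
open Finset SimpleGraph

lemma cross_edge {W : Type*} (G : SimpleGraph W) (S : Set W) :
    ∀ {x y : W} (_ : G.Walk x y) (_ : x ∈ S) (_ : y ∉ S),
      ∃ a b, a ∈ S ∧ b ∉ S ∧ G.Adj a b := by
  intro x y p
  induction p with
  | nil => intro h h'; exact absurd h h'
  | cons h q ih =>
    intro hx hy
    rename_i u v z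
    by_cases hv : v ∈ S
    · exact ih hv hy
    · exact ⟨u, v, hx, hv, h⟩

lemma exists_leaf {V : Type*} [Fintype V] (T : SimpleGraph V) [DecidableRel T.Adj]
    (hT : T.IsTree) (h2 : 2 ≤ Fintype.card V) : ∃ v, T.degree v = 1 := by
  classical
  have hdeg : ∀ v, 1 ≤ T.degree v := by
    intro v
    rw [Nat.one_le_iff_ne_zero, ← Nat.pos_iff_ne_zero, T.degree_pos_iff_exists_adj]
    obtain ⟨u, hu⟩ := Fintype.exists_ne_of_one_lt_card h2 v
    obtain ⟨p⟩ := hT.isConnected.preconnected v u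
    cases p with
    | nil => exact absurd rfl hu.symm
    | cons h q => exact ⟨_, h⟩
  by_contra hno
  push_neg at hno
  have hdeg2 : ∀ v, 2 ≤ T.degree v := by
    intro v
    rcases Nat.lt_or_ge (T.degree v) 2 with h | h
    · interval_cases hd : T.degree v
      · exact absurd (hdeg v) (by omega)
      · exact absurd hd (hno v)
    · exact h
  have hsum := T.sum_degrees_eq_twice_card_edges
  have hcard := hT.card_edgeFinset
  have : ∑ v, T.degree v ≥ 2 * Fintype.card V := by
    calc ∑ v, T.degree v ≥ ∑ _v : V, 2 := Finset.sum_le_sum (fun v _ => hdeg2 v)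
    _ = 2 * Fintype.card V := by simp [Finset.sum_const, mul_comm]
  omega

/-- Lemma 4: any tree with `a` edges embeds into any connected graph with at
least `a + 1` vertices that contains a clique of order `a`. -/
theorem stmt_3 {V W : Type*} [Fintype V] [Fintype W]
    (T : SimpleGraph V) [DecidableRel T.Adj]
    (G : SimpleGraph W)
    (a : ℕ) (hT : T.IsTree) (hTd : T.edgeFinset.card = a)
    (hGconn : G.Connected) (hGcard : a + 1 ≤ Fintype.card W)
    (K : Finset W) (hK : G.IsNClique a K) :
    ∃ f : V → W, Function.Injective f ∧
      ∀ u v : V, T.Adj u v → G.Adj (f u) (f v) := by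
  classical
  have hcV : Fintype.card V = a + 1 := by
    have := hT.card_edgeFinset; omega
  rcases Nat.eq_zero_or_pos a with ha | ha
  · have hW : Nonempty W := Fintype.card_pos_iff.mp (by omega)
    obtain ⟨w⟩ := hW
    have hV1 : Fintype.card V ≤ 1 := by omega
    refine ⟨fun _ => w, fun u v _ => Fintype.card_le_one_iff.mp hV1 u v, ?_⟩
    intro u v huv
    exact absurd (Fintype.card_le_one_iff.mp hV1 u v) huv.ne
  · -- leaf l with unique neighbor p
    obtain ⟨l, hl⟩ := exists_leaf T hT (by omega)
    obtain ⟨p, hp⟩ : ∃ p, T.neighborFinset l = {p} :=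
      Finset.card_eq_one.mp (by rw [T.card_neighborFinset_eq_degree]; exact hl)
    have hpl : T.Adj l p :=
      (T.mem_neighborFinset l p).mp (hp ▸ Finset.mem_singleton_self p)
    have hKcard : K.card = a := hK.2
    -- pick k0 ∈ K, w0 ∉ K ; get crossing edge
    obtain ⟨k0, hk0⟩ : K.Nonempty := Finset.card_pos.mp (by omega)
    obtain ⟨w0, hw0⟩ : Kᶜ.Nonempty := Finset.card_pos.mp (by
      rw [Finset.card_compl]; omega)
    rw [Finset.mem_compl] at hw0
    obtain ⟨pk⟩ := hGconn.preconnected k0 w0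
    obtain ⟨k, w, hkK, hwK, hkw⟩ :=
      cross_edge G (↑K : Set W) pk (Finset.mem_coe.mpr hk0)
        (fun h => hw0 (Finset.mem_coe.mp h))
    rw [Finset.mem_coe] at hkK
    have hwK' : w ∉ K := fun h => hwK (Finset.mem_coe.mpr h)
    -- bijection from V \ {l} to K sending p to k
    set s : Finset V := Finset.univ.erase l with hs
    have hscard : s.card = K.card := by
      rw [hs, Finset.card_erase_of_mem (Finset.mem_univ l), Finset.card_univ]
      omega
    have hps : p ∈ s := Finset.mem_erase.mpr ⟨hpl.ne', Finset.mem_univ p⟩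
    let e0 : (s : Type _) ≃ (K : Type _) := Finset.equivOfCardEq hscard
    let e : (s : Type _) ≃ (K : Type _) :=
      e0.trans (Equiv.swap (e0 ⟨p, hps⟩) ⟨k, hkK⟩)
    have hep : e ⟨p, hps⟩ = ⟨k, hkK⟩ := by
      simp only [e, Equiv.trans_apply, Equiv.swap_apply_left]
    have hmem : ∀ v : V, v ≠ l → v ∈ s :=
      fun v hv => Finset.mem_erase.mpr ⟨hv, Finset.mem_univ v⟩
    refine ⟨fun v => if hv : v = l then w else ↑(e ⟨v, hmem v hv⟩), ?_, ?_⟩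
    · intro u v huv
      dsimp only at huv
      by_cases hu : u = l <;> by_cases hv : v = l
      · rw [hu, hv]
      · rw [dif_pos hu, dif_neg hv] at huv
        exact absurd (huv ▸ (e ⟨v, hmem v hv⟩).2) hwK'
      · rw [dif_neg hu, dif_pos hv] at huv
        exact absurd (huv ▸ (e ⟨u, hmem u hu⟩).2) hwK'
      · rw [dif_neg hu, dif_neg hv] at huv
        have := e.injective (Subtype.ext huv)
        exact congrArg Subtype.val this
    · intro u v huv
      dsimp only
      by_cases hu : u = l <;> by_cases hv : v = l
      · exact absurd (hu.trans hv.symm) huv.ne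
      · have hvp : v = p := by
          have : v ∈ T.neighborFinset l :=
            (T.mem_neighborFinset l v).mpr (hu ▸ huv)
          rw [hp] at this; exact Finset.mem_singleton.mp this
        rw [dif_pos hu, dif_neg hv]
        have : (⟨v, hmem v hv⟩ : s) = ⟨p, hps⟩ := Subtype.ext hvp
        rw [this, hep]
        exact hkw.symm
      · have hup : u = p := by
          have : u ∈ T.neighborFinset l :=
            (T.mem_neighborFinset l u).mpr (hv ▸ huv.symm)
          rw [hp] at this; exact Finset.mem_singleton.mp this
        rw [dif_neg hu, dif_pos hv]
        have : (⟨u, hmem u hu⟩ : s) = ⟨p, hps⟩ := Subtype.ext hup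
        rw [this, hep]
        exact hkw
      · rw [dif_neg hu, dif_neg hv]
        refine hK.1 (Finset.mem_coe.mpr (e ⟨u, hmem u hu⟩).2)
          (Finset.mem_coe.mpr (e ⟨v, hmem v hv⟩).2) ?_
        intro h
        exact huv.ne (congrArg Subtype.val (e.injective (Subtype.ext h)))
end

section
/- Let F be a forest that is a disjoint union of p stars with a_1, ..., a_p ≥ 1 edges respectively, and d = Σ a_i. Then every graph G with at least d + p vertices and minimum degree at least d contains F as a subgraph. -/
open Finset

/-- Twice the number of edges of `G` inside `T`. -/
private def starE {W : Type*} [Fintype W] [DecidableEq W] (G : SimpleGraph W) [DecidableRel G.Adj]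
    (T : Finset W) : ℕ :=
  ∑ x ∈ T, (G.neighborFinset x ∩ T).card

private lemma starE_insert {W : Type*} [Fintype W] [DecidableEq W] (G : SimpleGraph W)
    [DecidableRel G.Adj] {T : Finset W} {u : W} (hu : u ∉ T) :
    starE G (insert u T) = 2 * (G.neighborFinset u ∩ T).card + starE G T := by
  unfold starE
  rw [Finset.sum_insert hu]
  have h1 : G.neighborFinset u ∩ insert u T = G.neighborFinset u ∩ T := by
    rw [Finset.inter_insert_of_notMem (by simp)]
  have h2 : ∀ x ∈ T, (G.neighborFinset x ∩ insert u T).card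
      = (G.neighborFinset x ∩ T).card + (if G.Adj x u then 1 else 0) := by
    intro x hx
    by_cases h : G.Adj x u
    · have hmem : u ∈ G.neighborFinset x := by simpa using h
      rw [Finset.inter_insert_of_mem hmem, Finset.card_insert_of_notMem (by simp [hu]), if_pos h]
    · have hmem : u ∉ G.neighborFinset x := by simpa using h
      rw [Finset.inter_insert_of_notMem hmem, if_neg h, Nat.add_zero]
  rw [Finset.sum_congr rfl h2, Finset.sum_add_distrib]
  have h3 : (∑ x ∈ T, if G.Adj x u then 1 else 0) = (G.neighborFinset u ∩ T).card := by
    rw [← Finset.card_filter]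
    congr 1
    ext x
    simp [SimpleGraph.adj_comm, and_comm]
  rw [h1, h3]
  ring

/-- A forest of `p` vertex-disjoint stars `K_{1, a i}` with `a i ≥ 1` and
`d = ∑ a i` embeds into any graph `G` with at least `d + p` vertices and
minimum degree at least `d`. The star with index `i` is modelled with centre
`⟨i, none⟩` and leaves `⟨i, some j⟩`. -/
theorem stmt_13 {p : ℕ} {W : Type*} [Fintype W]
    (G : SimpleGraph W) [DecidableRel G.Adj]
    (a : Fin p → ℕ) (d : ℕ)
    (ha : ∀ i, 1 ≤ a i) (hd : d = ∑ i, a i)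
    (hcard : d + p ≤ Fintype.card W)
    (hG : ∀ w : W, d ≤ G.degree w) :
    ∃ f : (Σ i : Fin p, Option (Fin (a i))) → W, Function.Injective f ∧
      ∀ (i : Fin p) (j : Fin (a i)), G.Adj (f ⟨i, none⟩) (f ⟨i, some j⟩) := by
  classical
  rcases Nat.eq_zero_or_pos p with hp | hp
  · subst hp
    exact ⟨fun x => x.1.elim0, fun x => x.1.elim0, fun i => i.elim0⟩
  have hdp : p ≤ d := by
    rw [hd]
    calc p = ∑ _i : Fin p, 1 := by simp
      _ ≤ ∑ i, a i := Finset.sum_le_sum fun i _ => ha i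
  -- choose a p-set S of centres minimizing the number of internal edges
  have hne : (Finset.univ.powersetCard p (α := W)).Nonempty := by
    rw [Finset.powersetCard_nonempty]
    simpa using le_trans (Nat.le_add_left p d) hcard
  obtain ⟨S, hSmem, hSmin⟩ := Finset.exists_min_image _ (starE G) hne
  have hScard : S.card = p := (Finset.mem_powersetCard.mp hSmem).2
  let c : Fin p ≃ S := (S.equivFinOfCardEq hScard).symm
  have cmem : ∀ i, ((c i : W)) ∈ S := fun i => (c i).2
  have cinj : Function.Injective (fun i => ((c i : W))) :=
    Subtype.val_injective.comp c.injective
  -- the Hall family: leaf slots to available neighbours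
  set t : (Σ i : Fin p, Fin (a i)) → Finset W :=
    fun x => G.neighborFinset (c x.1) \ S with ht
  have hall : ∀ s : Finset (Σ i : Fin p, Fin (a i)), s.card ≤ (s.biUnion t).card := by
    intro s
    rcases s.eq_empty_or_nonempty with rfl | hsne
    · simp
    set I : Finset (Fin p) := s.image Sigma.fst with hI
    have hIne : I.Nonempty := hsne.image _
    have hIlep : I.card ≤ p := by simpa using I.card_le_univ
    -- s.card ≤ ∑_{i ∈ I} a i
    have hsI : s.card ≤ ∑ i ∈ I, a i := by
      calc s.card ≤ (I.sigma fun i => (Finset.univ : Finset (Fin (a i)))).card := by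
            apply Finset.card_le_card
            intro x hx
            rw [Finset.mem_sigma]
            exact ⟨Finset.mem_image_of_mem _ hx, Finset.mem_univ _⟩
        _ = ∑ i ∈ I, a i := by rw [Finset.card_sigma]; simp
    -- ∑_{i ∈ I} a i + (p - |I|) ≤ d
    have h1 : ∑ i ∈ I, a i + (p - I.card) ≤ d := by
      have hsplit : ∑ i ∈ I, a i + ∑ i ∈ Iᶜ, a i = d := by
        rw [hd, Finset.sum_add_sum_compl]
      have hcompl : p - I.card ≤ ∑ i ∈ Iᶜ, a i := by
        calc p - I.card = Iᶜ.card := by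
              rw [Finset.card_compl, Fintype.card_fin]
          _ = ∑ _i ∈ Iᶜ, 1 := by simp
          _ ≤ ∑ i ∈ Iᶜ, a i := Finset.sum_le_sum fun i _ => ha i
      omega
    by_cases hcase : ∃ i ∈ I, (G.neighborFinset (c i) ∩ S).card + I.card ≤ p
    · -- some centre has few neighbours inside S
      obtain ⟨i0, hi0I, hdegle⟩ := hcase
      obtain ⟨x, hxs, hx1⟩ := Finset.mem_image.mp hi0I
      have hsub : t x ⊆ s.biUnion t := Finset.subset_biUnion_of_mem t hxs
      have htx : t x = G.neighborFinset (c i0) \ S := by simp only [ht]; rw [hx1]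
      have hcards : (G.neighborFinset (c i0) \ S).card
          + (G.neighborFinset (c i0) ∩ S).card = G.degree (c i0) := by
        rw [Finset.card_sdiff_add_card_inter, SimpleGraph.card_neighborFinset_eq_degree]
      have hdeg := hG (c i0)
      have := Finset.card_le_card hsub
      rw [htx] at this
      omega
    · -- all centres in I have many neighbours inside S: swap argument
      push_neg at hcase
      have hbig : Finset.univ \ S ⊆ s.biUnion t := by
        intro u hu
        have huS : u ∉ S := (Finset.mem_sdiff.mp hu).2
        by_contra hnot
        -- u is adjacent to no centre in I
        have hnadj : ∀ i ∈ I, ¬ G.Adj (c i) u := by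
          intro i hiI hadj
          obtain ⟨x, hxs, hx1⟩ := Finset.mem_image.mp hiI
          apply hnot
          apply Finset.mem_biUnion.mpr ⟨x, hxs, ?_⟩
          rw [ht]
          simp only [Finset.mem_sdiff, SimpleGraph.mem_neighborFinset]
          exact ⟨by rw [hx1]; exact hadj, huS⟩
        obtain ⟨i0, hi0I⟩ := hIne
        set v : W := (c i0 : W) with hv
        have hvS : v ∈ S := cmem i0
        have huv : u ∉ S.erase v := fun h => huS (Finset.mem_of_mem_erase h)
        -- the swapped set
        have hS'mem : insert u (S.erase v) ∈ Finset.univ.powersetCard p := by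
          rw [Finset.mem_powersetCard]
          refine ⟨Finset.subset_univ _, ?_⟩
          rw [Finset.card_insert_of_notMem huv, Finset.card_erase_of_mem hvS, hScard]
          omega
        have hmin := hSmin _ hS'mem
        have hES : starE G S = 2 * (G.neighborFinset v ∩ S.erase v).card
            + starE G (S.erase v) := by
          conv_lhs => rw [← Finset.insert_erase hvS]
          exact starE_insert G (Finset.notMem_erase v S)
        have hES' := starE_insert G (T := S.erase v) (u := u) huv
        have hkey : (G.neighborFinset v ∩ S.erase v).card
            ≤ (G.neighborFinset u ∩ S.erase v).card := by omega
        -- LHS: erase doesn't matter since v is not its own neighbour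
        have hL : G.neighborFinset v ∩ S.erase v = G.neighborFinset v ∩ S := by
          rw [Finset.inter_erase, Finset.erase_eq_of_notMem (by simp)]
        -- RHS is inside S minus all centres of I
        have hR : G.neighborFinset u ∩ S.erase v ⊆ S \ I.image (fun i => (c i : W)) := by
          intro x hx
          obtain ⟨hxN, hxS⟩ := Finset.mem_inter.mp hx
          rw [Finset.mem_sdiff]
          refine ⟨Finset.mem_of_mem_erase hxS, ?_⟩
          rw [Finset.mem_image]
          rintro ⟨i, hiI, rfl⟩
          exact hnadj i hiI ((SimpleGraph.mem_neighborFinset _ _ _).mp hxN).symm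
        have hRcard : (S \ I.image (fun i => (c i : W))).card = p - I.card := by
          rw [Finset.card_sdiff_of_subset]
          · rw [Finset.card_image_of_injective _ cinj, hScard]
          · intro x hx
            obtain ⟨i, _, rfl⟩ := Finset.mem_image.mp hx
            exact cmem i
        have hcase0 : p < (G.neighborFinset v ∩ S).card + I.card := hcase i0 hi0I
        have := Finset.card_le_card hR
        rw [hL] at hkey
        omega
      have hbigcard : (Finset.univ \ S).card = Fintype.card W - p := by
        rw [Finset.card_sdiff_of_subset (Finset.subset_univ _), hScard, Finset.card_univ]
      have := Finset.card_le_card hbig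
      omega
  obtain ⟨g, ginj, gmem⟩ := (Finset.all_card_le_biUnion_card_iff_exists_injective t).mp hall
  have gnS : ∀ x, g x ∉ S := by
    intro x
    have := gmem x
    rw [ht] at this
    exact (Finset.mem_sdiff.mp this).2
  have gadj : ∀ x : (Σ i : Fin p, Fin (a i)), G.Adj (c x.1) (g x) := by
    intro x
    have := gmem x
    rw [ht] at this
    exact (SimpleGraph.mem_neighborFinset _ _ _).mp (Finset.mem_sdiff.mp this).1
  refine ⟨fun x => match x with
    | ⟨i, none⟩ => (c i : W)
    | ⟨i, some j⟩ => g ⟨i, j⟩, ?_, ?_⟩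
  · rintro ⟨i, _ | j⟩ ⟨i', _ | j'⟩ h
    · have h' : (c i : W) = (c i' : W) := h
      have : i = i' := cinj h'
      subst this; rfl
    · have h' : (c i : W) = g ⟨i', j'⟩ := h
      exact absurd (h' ▸ cmem i) (gnS ⟨i', j'⟩)
    · have h' : g ⟨i, j⟩ = (c i' : W) := h
      exact absurd (h' ▸ cmem i') (gnS ⟨i, j⟩)
    · have h' : g ⟨i, j⟩ = g ⟨i', j'⟩ := h
      have h2 := ginj h'
      rw [Sigma.mk.inj_iff] at h2
      obtain ⟨rfl, h3⟩ := h2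
      rw [heq_eq_eq] at h3
      subst h3; rfl
  · intro i j
    exact gadj ⟨i, j⟩
end
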